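/- Let m ≥ 2, let f^1,…,f^m : {0,1}^n → {0,1}, let i ∈ {1,…,n} be a voter, and let k, l ∈ {1,…,m} be two distinct issues. Then OSI_i(f^k) · Inf_i(f^l) · ∏_{j≠k,l} d(f^j, 0) ≤ 4·ĨC(f^1,…,f^m). -/

import Mathlib

namespace JudgementAggregation

open Finset

open Classical in
noncomputable def prob {α : Type*} (s : Finset α) (P : α → Prop) : ℝ :=
  ((s.filter P).card : ℝ) / s.card

/-- Distance between boolean functions: probability of disagreement, uniform on `{0,1}^n`. -/
noncomputable def bdist {n : ℕ} (f g : (Fin n → Bool) → Bool) : ℝ :=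
  prob (Finset.univ : Finset (Fin n → Bool)) (fun x => f x ≠ g x)

/-- Inconsistency index of `⟨f^1,…,f^m,h⟩` for the conjunction agenda over `m` premises:
`Pr_{x^1,…,x^m i.i.d. uniform}[ f^1(x^1) ∧ ⋯ ∧ f^m(x^m) ≠ h(x^1 ∧ ⋯ ∧ x^m) ]`. -/
noncomputable def ICand {m n : ℕ} (f : Fin m → (Fin n → Bool) → Bool)
    (h : (Fin n → Bool) → Bool) : ℝ :=
  prob (Finset.univ : Finset (Fin m → Fin n → Bool)) (fun x =>
    decide (∀ j, f j (x j) = true) ≠ h (fun i => decide (∀ j, x j i = true)))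

/-- `ĨC(f^1,…,f^m)`: minimal inconsistency index over all completions `h`. -/
noncomputable def ICmin {m n : ℕ} (f : Fin m → (Fin n → Bool) → Bool) : ℝ :=
  ⨅ h : (Fin n → Bool) → Bool, ICand f h

/-- The influence (Banzhaf index) of voter `i` on `f`. -/
noncomputable def influence {n : ℕ} (i : Fin n) (f : (Fin n → Bool) → Bool) : ℝ :=
  prob (Finset.univ : Finset (Fin n → Bool)) (fun x => f x ≠ f (Function.update x i (!x i)))

/-- The (zero-)ignorability of voter `i` on `f`: `Pr[f(x) = 1 | x_i = 0]`. -/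
noncomputable def osi {n : ℕ} (i : Fin n) (f : (Fin n → Bool) → Bool) : ℝ :=
  prob (Finset.univ.filter (fun x : Fin n → Bool => x i = false)) (fun x => f x = true)

lemma prob_eq {α : Type*} (s : Finset α) (P : α → Prop) [DecidablePred P] :
    prob s P = ((s.filter P).card : ℝ) / s.card := by
  unfold prob
  congr 1
  norm_cast
  exact Finset.card_bij (fun a _ => a) (fun a ha => by
      simp only [Finset.mem_filter] at ha ⊢; exact ha)
    (fun _ _ _ _ h => h)
    (fun b hb => ⟨b, by simp only [Finset.mem_filter] at hb ⊢; exact hb, rfl⟩)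

lemma card_filter_congr {α : Type*} (s : Finset α) (p q : α → Prop)
    [DecidablePred p] [DecidablePred q] (h : ∀ x, p x ↔ q x) :
    (s.filter p).card = (s.filter q).card := by
  congr 1
  exact Finset.filter_congr fun x _ => h x

lemma card_filter_pi {m n : ℕ} (Q : Fin m → (Fin n → Bool) → Prop)
    [∀ j, DecidablePred (Q j)] :
    ((univ : Finset (Fin m → Fin n → Bool)).filter (fun x => ∀ j, Q j (x j))).card
      = ∏ j, ((univ : Finset (Fin n → Bool)).filter (Q j)).card := by
  classical
  rw [← Fintype.card_subtype]
  rw [Fintype.card_congr (Equiv.subtypePiEquivPi (p := fun j y => Q j y)), Fintype.card_pi]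
  exact Finset.prod_congr rfl fun j _ => by rw [Fintype.card_subtype]

lemma card_false_half {n : ℕ} (i : Fin n) :
    ((univ : Finset (Fin n → Bool)).filter (fun x => x i = false)).card * 2 = 2 ^ n := by
  classical
  have key : ((univ : Finset (Fin n → Bool)).filter (fun x => x i = false)).card
      = ((univ : Finset (Fin n → Bool)).filter (fun x => ¬(x i = false))).card := by
    apply Finset.card_bij' (fun x _ => Function.update x i true)
      (fun x _ => Function.update x i false)
    · intro a ha
      simp only [mem_filter, mem_univ, true_and] at ha
      rw [Function.update_idem, ← ha, Function.update_eq_self]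
    · intro a ha
      simp only [mem_filter, mem_univ, true_and, Bool.not_eq_false] at ha
      rw [Function.update_idem, ← ha, Function.update_eq_self]
    · intro a ha; simp
    · intro a ha; simp
  have h2 : ((univ : Finset (Fin n → Bool)).filter (fun x => x i = false)).card
      + ((univ : Finset (Fin n → Bool)).filter (fun x => ¬(x i = false))).card
      = (univ : Finset (Fin n → Bool)).card :=
    Finset.card_filter_add_card_filter_not _
  have h3 : (univ : Finset (Fin n → Bool)).card = 2 ^ n := by
    simp [Finset.card_univ]
  rw [Nat.mul_comm, Nat.two_mul]
  nth_rewrite 2 [key]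
  rw [h2]
  exact h3

/-- bound on ignorability times influence via the minimal inconsistency index. -/
theorem osi_mul_influence_le (m n : ℕ) (hm : 2 ≤ m)
    (f : Fin m → (Fin n → Bool) → Bool) (i : Fin n) (k l : Fin m) (hkl : k ≠ l) :
    osi i (f k) * influence i (f l) *
        ∏ j ∈ (Finset.univ.erase k).erase l, bdist (f j) (fun _ => false) ≤
      4 * ICmin f := by
  classical
  have hlk : l ≠ k := hkl.symm
  -- per-issue predicates
  set Pk : (Fin n → Bool) → Prop := fun y => y i = false ∧ f k y = true with hPk
  set Pl : (Fin n → Bool) → Prop :=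
    fun y => f l y ≠ f l (Function.update y i (!(y i))) with hPl
  set P : Fin m → (Fin n → Bool) → Prop := fun j y =>
    if j = k then Pk y else if j = l then Pl y else f j y = true with hPdef
  set E : Finset (Fin m) := (Finset.univ.erase k).erase l with hE
  set S : Finset (Fin m → Fin n → Bool) :=
    univ.filter (fun x => ∀ j, P j (x j)) with hSdef
  set σ : (Fin m → Fin n → Bool) → (Fin m → Fin n → Bool) :=
    fun x => Function.update x l (Function.update (x l) i (!(x l i))) with hσ
  -- basic cardinalities
  set A : ℕ := ((univ : Finset (Fin n → Bool)).filter Pk).card with hA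
  set B : ℕ := ((univ : Finset (Fin n → Bool)).filter Pl).card with hB
  set C : Fin m → ℕ :=
    fun j => ((univ : Finset (Fin n → Bool)).filter (fun y => f j y = true)).card with hC
  set D : ℕ := ((univ : Finset (Fin n → Bool)).filter (fun x => x i = false)).card with hD
  have hDn : (univ : Finset (Fin n → Bool)).card = 2 ^ n := by
    simp [Finset.card_univ]
  have hNn : ((univ : Finset (Fin m → Fin n → Bool))).card = (2 ^ n) ^ m := by
    simp [Finset.card_univ, Fintype.card_fun]
  have hD2 : D * 2 = 2 ^ n := card_false_half i
  -- membership unpacking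
  have memS : ∀ x : Fin m → Fin n → Bool, x ∈ S →
      (x k i = false ∧ f k (x k) = true) ∧
      (f l (x l) ≠ f l (Function.update (x l) i (!(x l i)))) ∧
      (∀ j, j ≠ k → j ≠ l → f j (x j) = true) := by
    intro x hx
    have hx' : ∀ j, P j (x j) := (Finset.mem_filter.mp hx).2
    refine ⟨?_, ?_, ?_⟩
    · have := hx' k; simpa [hPdef, hPk] using this
    · have := hx' l; simpa [hPdef, hPl, hlk] using this
    · intro j hjk hjl; have := hx' j; simpa [hPdef, hjk, hjl] using this
  -- the conjunction equals f l (y l) when all others are true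
  have conj_eq : ∀ (y : Fin m → Fin n → Bool), (∀ j, j ≠ l → f j (y j) = true) →
      decide (∀ j, f j (y j) = true) = f l (y l) := by
    intro y hy
    by_cases hfl : f l (y l) = true
    · rw [hfl]
      exact decide_eq_true (fun j => by by_cases hj : j = l
                                        · rw [hj]; exact hfl
                                        · exact hy j hj)
    · have hfl' : f l (y l) = false := Bool.not_eq_true _ |>.mp hfl
      rw [hfl']
      exact decide_eq_false (fun hall => hfl (hall l))
  -- σ is an involution
  have hinv : ∀ x, σ (σ x) = x := by
    intro x
    funext j
    by_cases hj : j = l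
    · subst hj
      simp only [hσ, Function.update_self, Function.update_idem, Bool.not_not,
        Function.update_eq_self]
    · simp only [hσ, Function.update_of_ne hj]
  -- key pointwise facts for x ∈ S
  have hkey : ∀ x ∈ S,
      ((fun i' => decide (∀ j, σ x j i' = true)) =
        (fun i' => decide (∀ j, x j i' = true))) ∧
      decide (∀ j, f j (σ x j) = true) ≠ decide (∀ j, f j (x j) = true) := by
    intro x hx
    obtain ⟨⟨hki, hkt⟩, hlne, hoth⟩ := memS x hx
    have hσl : σ x l = Function.update (x l) i (!(x l i)) := by
      simp [hσ]
    have hσne : ∀ j, j ≠ l → σ x j = x j := by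
      intro j hj; simp [hσ, Function.update_of_ne hj]
    constructor
    · funext i'
      by_cases hi' : i' = i
      · subst hi'
        have h1 : ¬ (∀ j, σ x j i' = true) := by
          intro hall
          have := hall k
          rw [hσne k hkl, hki] at this
          exact Bool.false_ne_true this
        have h2 : ¬ (∀ j, x j i' = true) := by
          intro hall
          have := hall k
          rw [hki] at this
          exact Bool.false_ne_true this
        rw [decide_eq_false h1, decide_eq_false h2]
      · have hpt : ∀ j, σ x j i' = x j i' := by
          intro j
          by_cases hj : j = l
          · subst hj
            rw [hσl, Function.update_of_ne hi']
          · rw [hσne j hj]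
        simp only [hpt]
    · have hothσ : ∀ j, j ≠ l → f j (σ x j) = true := by
        intro j hj; rw [hσne j hj]
        by_cases hjk : j = k
        · subst hjk; exact hkt
        · exact hoth j hjk hj
      have hothx : ∀ j, j ≠ l → f j (x j) = true := by
        intro j hj
        by_cases hjk : j = k
        · subst hjk; exact hkt
        · exact hoth j hjk hj
      rw [conj_eq (σ x) hothσ, conj_eq x hothx, hσl]
      exact fun e => hlne e.symm
  -- cardinality of S as a product
  have hprodS : S.card = A * (B * ∏ j ∈ E, C j) := by
    rw [hSdef, card_filter_pi P]
    rw [← Finset.mul_prod_erase univ _ (Finset.mem_univ k),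
      ← Finset.mul_prod_erase (univ.erase k) _ (Finset.mem_erase.mpr ⟨hlk, Finset.mem_univ l⟩)]
    congr 1
    · rw [hA]
      exact card_filter_congr _ _ _ (fun y => by simp [hPdef])
    congr 1
    · rw [hB]
      exact card_filter_congr _ _ _ (fun y => by simp [hPdef, hlk])
    · apply Finset.prod_congr rfl
      intro j hj
      obtain ⟨hjl, hjk'⟩ := Finset.mem_erase.mp hj
      obtain ⟨hjk, -⟩ := Finset.mem_erase.mp hjk'
      exact card_filter_congr _ _ _ (fun y => by simp [hPdef, hjk, hjl])
  -- the three probabilities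
  have hosi : osi i (f k) = (A : ℝ) / (D : ℝ) := by
    rw [osi, prob_eq, Finset.filter_filter]
  have hinf : influence i (f l) = (B : ℝ) / (2:ℝ)^n := by
    rw [influence, prob_eq]
    have e1 : ((univ : Finset (Fin n → Bool)).filter
        (fun x => f l x ≠ f l (Function.update x i (!x i)))).card = B := by
      rw [hB]
    rw [e1]
    all_goals rw [hDn]
    all_goals push_cast
    all_goals ring
  have hbd : ∀ j : Fin m, bdist (f j) (fun _ => false) = (C j : ℝ) / (2:ℝ)^n := by
    intro j
    rw [bdist, prob_eq]
    have e1 : ((univ : Finset (Fin n → Bool)).filter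
        (fun x => f j x ≠ (fun _ => false) x)).card = C j := by
      rw [hC]; exact card_filter_congr _ _ _ (fun x => by simp)
    rw [e1]
    all_goals rw [hDn]
    all_goals push_cast
    all_goals ring
  have hEcard : E.card + 2 = m := by
    rw [hE, Finset.card_erase_of_mem (Finset.mem_erase.mpr ⟨hlk, Finset.mem_univ l⟩),
      Finset.card_erase_of_mem (Finset.mem_univ k), Finset.card_univ, Fintype.card_fin,
      Nat.sub_sub]
    exact Nat.sub_add_cancel hm
  have hD2' : (D : ℝ) * 2 = (2:ℝ)^n := by
    have := congrArg (Nat.cast : ℕ → ℝ) hD2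
    push_cast at this
    linarith
  have htpos : (0:ℝ) < (2:ℝ)^n := by positivity
  have hDpos : (0:ℝ) < (D:ℝ) := by linarith
  have hDne : (D:ℝ) ≠ 0 := hDpos.ne'
  have hSR : (S.card : ℝ) = (A:ℝ) * ((B:ℝ) * ∏ j ∈ E, (C j : ℝ)) := by
    rw [hprodS]; push_cast; ring
  have hLHS : osi i (f k) * influence i (f l) * ∏ j ∈ E, bdist (f j) (fun _ => false)
      = 2 * (S.card : ℝ) / ((2:ℝ)^n)^m := by
    have hpow : ((2:ℝ)^n)^m = ((2:ℝ)^n)^(E.card) * ((2:ℝ)^n)^2 := by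
      rw [← pow_add, hEcard]
    have h2pos : (0:ℝ) < (D:ℝ) * 2 := by linarith
    have hp1 : (0:ℝ) < ((D:ℝ)*2)^E.card := pow_pos h2pos _
    rw [hosi, hinf, Finset.prod_congr rfl (fun j _ => hbd j),
      Finset.prod_div_distrib, Finset.prod_const, hSR, hpow, ← hD2']
    rw [div_mul_div_comm, div_mul_div_comm]
    rw [div_eq_div_iff
      (mul_ne_zero (mul_ne_zero hDpos.ne' h2pos.ne') hp1.ne')
      (mul_ne_zero hp1.ne' (pow_ne_zero 2 h2pos.ne'))]
    ring
  -- bound against every completion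
  have main : ∀ h₀ : (Fin n → Bool) → Bool,
      osi i (f k) * influence i (f l) * ∏ j ∈ E, bdist (f j) (fun _ => false)
        ≤ 4 * ICand f h₀ := by
    intro h₀
    set T : Finset (Fin m → Fin n → Bool) := univ.filter (fun x =>
      decide (∀ j, f j (x j) = true) ≠ h₀ (fun i' => decide (∀ j, x j i' = true))) with hT
    have hST : S.card ≤ 2 * T.card := by
      have h1 : (S.filter (fun x => x ∈ T)).card ≤ T.card :=
        Finset.card_le_card (fun x hx => (Finset.mem_filter.mp hx).2)
      have h2 : (S.filter (fun x => x ∉ T)).card ≤ T.card := by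
        apply Finset.card_le_card_of_injOn σ
        · intro x hx
          obtain ⟨hxS, hxnT⟩ := Finset.mem_filter.mp hx
          obtain ⟨hAND, hCONJ⟩ := hkey x hxS
          simp only [hT, Finset.mem_coe, Finset.mem_filter, Finset.mem_univ, true_and, ne_eq,
            Decidable.not_not, not_not] at hxnT ⊢
          rw [hAND]
          intro heq
          exact hCONJ (heq.trans hxnT.symm)
        · intro a ha b hb hab
          have := congrArg σ hab
          rwa [hinv, hinv] at this
      have h3 : (S.filter (fun x => x ∈ T)).card + (S.filter (fun x => x ∉ T)).card = S.card :=
        Finset.card_filter_add_card_filter_not _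
      calc S.card = _ + _ := h3.symm
        _ ≤ T.card + T.card := Nat.add_le_add h1 h2
        _ = 2 * T.card := (Nat.two_mul _).symm
    have hIC : ICand f h₀ = ((T.card : ℝ)) / ((2:ℝ)^n)^m := by
      rw [ICand, prob_eq]
      have e1 : ((univ : Finset (Fin m → Fin n → Bool)).filter (fun x =>
          decide (∀ j, f j (x j) = true) ≠ h₀ (fun i' => decide (∀ j, x j i' = true)))).card
          = T.card := by
        rw [hT]
      rw [e1]
      all_goals rw [hNn]
      all_goals push_cast
      all_goals ring
    have hpos : (0:ℝ) < ((2:ℝ)^n)^m := by positivity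
    have hTR : (S.card : ℝ) ≤ 2 * (T.card : ℝ) := by exact_mod_cast hST
    rw [hLHS, hIC]
    calc 2 * (S.card:ℝ) / ((2:ℝ)^n)^m
        ≤ 4 * (T.card:ℝ) / ((2:ℝ)^n)^m := (div_le_div_iff_of_pos_right hpos).mpr (by linarith)
      _ = 4 * ((T.card:ℝ) / ((2:ℝ)^n)^m) := by ring
  -- conclude via the infimum
  have h4 : osi i (f k) * influence i (f l) * ∏ j ∈ E, bdist (f j) (fun _ => false)
      ≤ 4 * (⨅ h₀ : (Fin n → Bool) → Bool, ICand f h₀) := by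
    have h5 : (osi i (f k) * influence i (f l) * ∏ j ∈ E, bdist (f j) (fun _ => false))
        / 4 ≤ ⨅ h₀ : (Fin n → Bool) → Bool, ICand f h₀ := by
      apply le_ciInf
      intro h₀
      linarith [main h₀]
    linarith
  rw [ICmin]
  exact h4


end JudgementAggregation
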